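/- arXiv:2201.08316 — 3 statements merged into one kernel-verified Lean document; each statement's English description precedes it below -/
import Mathlib

section
/- Let X and Y be Polish, c : X × Y → [0,∞) continuous, μ ∈ P(X), ν ∈ P(Y) with T_c(μ,ν) < ∞, and let π ∈ C(μ,ν) be optimal. Let x ∈ supp μ and suppose there exists a sequence (x_n, y_n)_{n∈ℕ} ⊂ supp π with x_n → x and y_n → ∞. If (1) there is a sequence (x̃_n)_{n∈ℕ} ⊂ X converging to x with lim_{n→∞} (c(x̃_n, y_n) − c(x_n, y_n)) = −∞, then every Kantorovich potential f ∈ S_c(μ,ν) equals −∞ everywhere on C_∞ = limsup_{n→∞} C(x̃_n, y_n). If additionally (2) C_∞ contains an open set U with x ∈ cl(U), then x lies in the boundary of supp μ. -/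
open MeasureTheory Filter Set Topology
open scoped ENNReal NNReal Manifold

noncomputable section

/-- The topological support of a Borel measure: points all of whose open
neighborhoods have positive measure. -/
def msupport {X : Type*} [TopologicalSpace X] [MeasurableSpace X]
    (μ : Measure X) : Set X :=
  {x | ∀ U : Set X, IsOpen U → x ∈ U → 0 < μ U}

/-- `π` is a coupling (transport plan) between `μ` and `ν`. -/
def IsCoupling {X Y : Type*} [MeasurableSpace X] [MeasurableSpace Y]
    (π : Measure (X × Y)) (μ : Measure X) (ν : Measure Y) : Prop :=
  π.map Prod.fst = μ ∧ π.map Prod.snd = ν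

/-- The optimal transport cost `T_c(μ, ν)`. -/
def transportCost {X Y : Type*} [MeasurableSpace X] [MeasurableSpace Y]
    (c : X → Y → ℝ) (μ : Measure X) (ν : Measure Y) : ℝ≥0∞ :=
  ⨅ (π : Measure (X × Y)) (_ : IsCoupling π μ ν),
    ∫⁻ p, ENNReal.ofReal (c p.1 p.2) ∂π

/-- `π` is an optimal transport plan between `μ` and `ν` for the cost `c`. -/
def IsOptimalPlan {X Y : Type*} [MeasurableSpace X] [MeasurableSpace Y]
    (c : X → Y → ℝ) (μ : Measure X) (ν : Measure Y) (π : Measure (X × Y)) : Prop :=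
  IsCoupling π μ ν ∧
    ∫⁻ p, ENNReal.ofReal (c p.1 p.2) ∂π = transportCost c μ ν

/-- The `c`-transform of a function `f : X → ℝ ∪ {-∞}`, namely
`f^c(y) = inf_x (c(x,y) - f(x))`. -/
def cTransform {X Y : Type*} (c : X → Y → ℝ) (f : X → EReal) : Y → EReal :=
  fun y => ⨅ x, ((c x y : ℝ) : EReal) - f x

/-- The `c`-transform of a function `g : Y → ℝ ∪ {-∞}`, namely
`g^c(x) = inf_y (c(x,y) - g(y))`. -/
def cTransformY {X Y : Type*} (c : X → Y → ℝ) (g : Y → EReal) : X → EReal :=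
  fun x => ⨅ y, ((c x y : ℝ) : EReal) - g y

/-- `f : X → ℝ ∪ {-∞}` is `c`-concave on `X`: it is the `c`-transform of some
`g : Y → ℝ ∪ {-∞}` and is not identically `-∞`. -/
def CConcave {X Y : Type*} (c : X → Y → ℝ) (f : X → EReal) : Prop :=
  (∃ g : Y → EReal, (∀ y, g y ≠ ⊤) ∧ f = cTransformY c g) ∧
    (∀ x, f x ≠ ⊤) ∧ (∃ x, f x ≠ ⊥)

/-- The `c`-subdifferential `∂_c f = {(x,y) | f(x) + f^c(y) = c(x,y)}`. -/
def cSubdiff {X Y : Type*} (c : X → Y → ℝ) (f : X → EReal) : Set (X × Y) :=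
  {p | f p.1 + cTransform c f p.2 = ((c p.1 p.2 : ℝ) : EReal)}

/-- `f` is a (generalized) Kantorovich potential for `(c, μ, ν)`: it is
`c`-concave and satisfies `f ⊕ f^c = c` almost surely with respect to every
optimal transport plan (which, for `T_c(μ,ν) < ∞`, is equivalent to
`∫ (f ⊕ f^c) dπ = T_c(μ,ν)` for every optimal `π`, since `f ⊕ f^c ≤ c`). -/
def IsKantorovichPotential {X Y : Type*} [MeasurableSpace X] [MeasurableSpace Y]
    (c : X → Y → ℝ) (μ : Measure X) (ν : Measure Y) (f : X → EReal) : Prop :=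
  CConcave c f ∧
    ∀ π : Measure (X × Y), IsOptimalPlan c μ ν π →
      ∀ᵐ p ∂π, f p.1 + cTransform c f p.2 = ((c p.1 p.2 : ℝ) : EReal)

/-- The plan `π` induces regularity on `U` with respect to the compact set `K`. -/
def InducesRegularityOn {X Y : Type*} [TopologicalSpace X] [TopologicalSpace Y]
    [MeasurableSpace X] [MeasurableSpace Y]
    (π : Measure (X × Y)) (U : Set X) (K : Set Y) : Prop :=
  IsCompact K ∧
    (Prod.fst '' msupport π) ∩ U = Prod.fst '' (msupport π ∩ (U ×ˢ K))

/-- The plan `π` induces regularity at the point `x ∈ supp μ`: it induces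
regularity on some relatively open neighborhood `U ⊆ supp μ` of `x`. -/
def InducesRegularityAt {X Y : Type*} [TopologicalSpace X] [TopologicalSpace Y]
    [MeasurableSpace X] [MeasurableSpace Y]
    (π : Measure (X × Y)) (μ : Measure X) (x : X) : Prop :=
  ∃ U : Set X, x ∈ U ∧ (∃ V : Set X, IsOpen V ∧ U = V ∩ msupport μ) ∧
    ∃ K : Set Y, InducesRegularityOn π U K

/-- `F` is a decomposition of the set `S` into its connected components. -/
def IsComponentDecomp {X : Type*} [TopologicalSpace X] {ι : Type*}
    (S : Set X) (F : ι → Set X) : Prop :=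
  (⋃ i, F i) = S ∧ Pairwise (fun i j => Disjoint (F i) (F j)) ∧
    ∀ i, ∃ x ∈ S, F i = connectedComponentIn S x

/-- A transport plan `π` is degenerate (with respect to decompositions `F`, `G`
of the supports of `μ` and `ν` into connected components). -/
def IsDegenerate {X Y : Type*} [MeasurableSpace X] [MeasurableSpace Y] {ι κ : Type*}
    (F : ι → Set X) (G : κ → Set Y) (μ : Measure X) (ν : Measure Y)
    (π : Measure (X × Y)) : Prop :=
  ∃ (I' : Set ι) (J' : Set κ),
    0 < (∑' i : I', μ (F i.1)) ∧
    (∑' i : I', μ (F i.1)) = (∑' i : I', ∑' j : J', π (F i.1 ×ˢ G j.1)) ∧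
    (∑' i : I', ∑' j : J', π (F i.1 ×ˢ G j.1)) = (∑' j : J', ν (G j.1)) ∧
    (∑' j : J', ν (G j.1)) < 1

end

section AuxLemmas

lemma isClosed_msupport {Z : Type*} [TopologicalSpace Z] [MeasurableSpace Z]
    (ρ : Measure Z) : IsClosed (msupport ρ) := by
  rw [← isOpen_compl_iff, isOpen_iff_forall_mem_open]
  intro z hz
  simp only [msupport, mem_compl_iff, mem_setOf_eq] at hz
  push_neg at hz
  obtain ⟨U, hU, hzU, hμU⟩ := hz
  refine ⟨U, fun w hw => ?_, hU, hzU⟩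
  simp only [msupport, mem_compl_iff, mem_setOf_eq]
  push_neg
  exact ⟨U, hU, hw, hμU⟩

lemma measure_compl_msupport {Z : Type*} [TopologicalSpace Z] [MeasurableSpace Z]
    [SecondCountableTopology Z] [OpensMeasurableSpace Z]
    (ρ : Measure Z) : ρ (msupport ρ)ᶜ = 0 := by
  have hB : TopologicalSpace.IsTopologicalBasis (TopologicalSpace.countableBasis Z) :=
    TopologicalSpace.isBasis_countableBasis Z
  have hcount : (TopologicalSpace.countableBasis Z).Countable :=
    TopologicalSpace.countable_countableBasis Z
  have hsub : (msupport ρ)ᶜ ⊆ ⋃₀ {b ∈ TopologicalSpace.countableBasis Z | ρ b = 0} := by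
    intro z hz
    simp only [msupport, mem_compl_iff, mem_setOf_eq] at hz
    push_neg at hz
    obtain ⟨U, hU, hzU, hμU⟩ := hz
    have hμU0 : ρ U = 0 := le_antisymm hμU zero_le
    obtain ⟨b, hbB, hzb, hbU⟩ := hB.exists_subset_of_mem_open hzU hU
    exact ⟨b, ⟨hbB, measure_mono_null hbU hμU0⟩, hzb⟩
  refine measure_mono_null hsub ?_
  rw [measure_sUnion_null_iff (hcount.mono (sep_subset _ _))]
  exact fun s hs => hs.2

lemma exists_mem_msupport {Z : Type*} [TopologicalSpace Z] [MeasurableSpace Z]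
    [SecondCountableTopology Z] [OpensMeasurableSpace Z]
    (ρ : Measure Z) {A : Set Z} (h : 0 < ρ A) : (A ∩ msupport ρ).Nonempty := by
  by_contra hne
  rw [not_nonempty_iff_eq_empty] at hne
  have hsub : A ⊆ (msupport ρ)ᶜ := by
    intro z hz
    by_contra hz'
    rw [notMem_compl_iff] at hz'
    exact (eq_empty_iff_forall_notMem.1 hne z) ⟨hz, hz'⟩
  exact absurd (measure_mono_null hsub (measure_compl_msupport ρ)) h.ne'

lemma isProbabilityMeasure_of_coupling {X Y : Type*} [MeasurableSpace X] [MeasurableSpace Y]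
    {π : Measure (X × Y)} {μ : Measure X} {ν : Measure Y} [IsProbabilityMeasure μ]
    (h : IsCoupling π μ ν) : IsProbabilityMeasure π := by
  constructor
  rw [← preimage_univ (f := @Prod.fst X Y),
    ← Measure.map_apply measurable_fst MeasurableSet.univ, h.1, measure_univ]

lemma map_mix {Z W : Type*} [MeasurableSpace Z] [MeasurableSpace W]
    {f : Z → W} (hf : Measurable f) (σ a b : Measure Z) (t : ℝ≥0∞) :
    (σ + (t • a + t • b)).map f = σ.map f + (t • a.map f + t • b.map f) := by
  simp [Measure.map_add _ _ hf, Measure.map_smul]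

lemma cost_nbhd {X Y : Type*} [TopologicalSpace X] [TopologicalSpace Y]
    {c : X → Y → ℝ} (hccont : Continuous fun p : X × Y => c p.1 p.2)
    (a : X) (b : Y) {ε : ℝ} (hε : 0 < ε) :
    ∃ (U : Set X) (V : Set Y), IsOpen U ∧ IsOpen V ∧ a ∈ U ∧ b ∈ V ∧
      ∀ u ∈ U, ∀ v ∈ V, |c u v - c a b| < ε := by
  have hopen : IsOpen {p : X × Y | |c p.1 p.2 - c a b| < ε} := by
    have hcont : Continuous fun p : X × Y => |c p.1 p.2 - c a b| :=
      (hccont.sub continuous_const).abs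
    exact isOpen_lt hcont continuous_const
  have hmem : (a, b) ∈ {p : X × Y | |c p.1 p.2 - c a b| < ε} := by simp [hε]
  obtain ⟨U, V, hU, hV, haU, hbV, hsub⟩ := isOpen_prod_iff.1 hopen a b hmem
  exact ⟨U, V, hU, hV, haU, hbV, fun u hu v hv => hsub (mk_mem_prod hu hv)⟩

lemma lintegral_le_of_bound {Z : Type*} [MeasurableSpace Z]
    (γ : Measure Z) [IsProbabilityMeasure γ] {S : Set Z} (hS : MeasurableSet S)
    (hγS : γ S = 1) {f : Z → ℝ≥0∞} (hf : Measurable f) {k : ℝ≥0∞}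
    (hk : ∀ z ∈ S, f z ≤ k) : ∫⁻ z, f z ∂γ ≤ k := by
  have hcompl : γ Sᶜ = 0 := by
    rw [measure_compl hS (measure_ne_top _ _), hγS, measure_univ, tsub_self]
  calc ∫⁻ z, f z ∂γ = ∫⁻ z in S, f z ∂γ + ∫⁻ z in Sᶜ, f z ∂γ :=
        (lintegral_add_compl f hS).symm
    _ = ∫⁻ z in S, f z ∂γ := by rw [setLIntegral_measure_zero _ _ hcompl, add_zero]
    _ ≤ ∫⁻ _ in S, k ∂γ := setLIntegral_mono measurable_const hk
    _ = k * γ S := setLIntegral_const S k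
    _ = k := by rw [hγS, mul_one]

lemma lintegral_ge_of_bound {Z : Type*} [MeasurableSpace Z]
    (γ : Measure Z) [IsProbabilityMeasure γ] {S : Set Z} (hS : MeasurableSet S)
    (hγS : γ S = 1) {f : Z → ℝ≥0∞} {k : ℝ≥0∞}
    (hk : ∀ z ∈ S, k ≤ f z) : k ≤ ∫⁻ z, f z ∂γ := by
  have hpt : ∀ z, S.indicator (fun _ => k) z ≤ f z := by
    intro z
    by_cases hz : z ∈ S
    · rw [indicator_of_mem hz]; exact hk z hz
    · rw [indicator_of_notMem hz]; exact zero_le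
  calc k = k * γ S := by rw [hγS, mul_one]
    _ = ∫⁻ z, S.indicator (fun _ => k) z ∂γ := (lintegral_indicator_const hS k).symm
    _ ≤ ∫⁻ z, f z ∂γ := lintegral_mono hpt

lemma two_point_mono {X Y : Type*}
    [TopologicalSpace X] [SecondCountableTopology X] [MeasurableSpace X] [BorelSpace X]
    [TopologicalSpace Y] [SecondCountableTopology Y] [MeasurableSpace Y] [BorelSpace Y]
    (c : X → Y → ℝ) (hc0 : ∀ x y, 0 ≤ c x y)
    (hccont : Continuous fun p : X × Y => c p.1 p.2)
    (μ : Measure X) (ν : Measure Y) [IsProbabilityMeasure μ] [IsProbabilityMeasure ν]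
    (hT : transportCost c μ ν < ⊤)
    (π : Measure (X × Y)) (hπ : IsOptimalPlan c μ ν π)
    (p q : X × Y) (hp : p ∈ msupport π) (hq : q ∈ msupport π) :
    c p.1 p.2 + c q.1 q.2 ≤ c p.1 q.2 + c q.1 p.2 := by
  by_contra hmono
  push_neg at hmono
  haveI hπprob : IsProbabilityMeasure π := isProbabilityMeasure_of_coupling hπ.1
  set ε : ℝ := (c p.1 p.2 + c q.1 q.2 - (c p.1 q.2 + c q.1 p.2)) / 5 with hεdef
  have h5ε : 5 * ε = c p.1 p.2 + c q.1 q.2 - (c p.1 q.2 + c q.1 p.2) := by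
    rw [hεdef]; ring
  have hε : 0 < ε := by rw [hεdef]; linarith
  obtain ⟨U11, V11, hU11, hV11, hm11a, hm11b, h11⟩ := cost_nbhd hccont p.1 p.2 hε
  obtain ⟨U12, V12, hU12, hV12, hm12a, hm12b, h12⟩ := cost_nbhd hccont p.1 q.2 hε
  obtain ⟨U21, V21, hU21, hV21, hm21a, hm21b, h21⟩ := cost_nbhd hccont q.1 p.2 hε
  obtain ⟨U22, V22, hU22, hV22, hm22a, hm22b, h22⟩ := cost_nbhd hccont q.1 q.2 hε
  set U1 : Set X := U11 ∩ U12 with hU1def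
  set V1 : Set Y := V11 ∩ V21 with hV1def
  set U2 : Set X := U21 ∩ U22 with hU2def
  set V2 : Set Y := V12 ∩ V22 with hV2def
  have hU1 : IsOpen U1 := hU11.inter hU12
  have hV1 : IsOpen V1 := hV11.inter hV21
  have hU2 : IsOpen U2 := hU21.inter hU22
  have hV2 : IsOpen V2 := hV12.inter hV22
  set A : Set (X × Y) := U1 ×ˢ V1 with hAdef
  set B : Set (X × Y) := U2 ×ˢ V2 with hBdef
  have hA : MeasurableSet A := hU1.measurableSet.prod hV1.measurableSet
  have hB : MeasurableSet B := hU2.measurableSet.prod hV2.measurableSet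
  have hπA : 0 < π A := hp A (hU1.prod hV1) (mk_mem_prod ⟨hm11a, hm12a⟩ ⟨hm11b, hm21b⟩)
  have hπB : 0 < π B := hq B (hU2.prod hV2) (mk_mem_prod ⟨hm21a, hm22a⟩ ⟨hm12b, hm22b⟩)
  have hπAne : π A ≠ ⊤ := measure_ne_top π A
  have hπBne : π B ≠ ⊤ := measure_ne_top π B
  set PA : Measure (X × Y) := (π A)⁻¹ • π.restrict A with hPAdef
  set PB : Measure (X × Y) := (π B)⁻¹ • π.restrict B with hPBdef
  have hPAA : PA A = 1 := by
    rw [hPAdef, Measure.smul_apply, smul_eq_mul, Measure.restrict_apply hA, inter_self]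
    exact ENNReal.inv_mul_cancel hπA.ne' hπAne
  have hPBB : PB B = 1 := by
    rw [hPBdef, Measure.smul_apply, smul_eq_mul, Measure.restrict_apply hB, inter_self]
    exact ENNReal.inv_mul_cancel hπB.ne' hπBne
  haveI hPAprob : IsProbabilityMeasure PA := by
    constructor
    rw [hPAdef, Measure.smul_apply, smul_eq_mul, Measure.restrict_apply_univ]
    exact ENNReal.inv_mul_cancel hπA.ne' hπAne
  haveI hPBprob : IsProbabilityMeasure PB := by
    constructor
    rw [hPBdef, Measure.smul_apply, smul_eq_mul, Measure.restrict_apply_univ]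
    exact ENNReal.inv_mul_cancel hπB.ne' hπBne
  set t : ℝ≥0∞ := min (π A) (π B) / 2 with htdef
  have ht0 : t ≠ 0 := by
    rw [htdef]
    exact (ENNReal.div_pos (lt_min hπA hπB).ne' ENNReal.ofNat_ne_top).ne'
  have htne : t ≠ ⊤ := by
    rw [htdef]
    exact (ENNReal.div_lt_top (ne_top_of_le_ne_top hπAne (min_le_left _ _))
      (by norm_num)).ne
  have hta : t * (π A)⁻¹ ≤ 2⁻¹ := by
    rw [htdef, ENNReal.div_eq_inv_mul, mul_comm 2⁻¹, mul_assoc]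
    calc min (π A) (π B) * (2⁻¹ * (π A)⁻¹) ≤ π A * (2⁻¹ * (π A)⁻¹) :=
          mul_le_mul_left (min_le_left _ _) _
      _ = (π A * (π A)⁻¹) * 2⁻¹ := by ring
      _ = 2⁻¹ := by rw [ENNReal.mul_inv_cancel hπA.ne' hπAne, one_mul]
  have htb : t * (π B)⁻¹ ≤ 2⁻¹ := by
    rw [htdef, ENNReal.div_eq_inv_mul, mul_comm 2⁻¹, mul_assoc]
    calc min (π A) (π B) * (2⁻¹ * (π B)⁻¹) ≤ π B * (2⁻¹ * (π B)⁻¹) :=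
          mul_le_mul_left (min_le_right _ _) _
      _ = (π B * (π B)⁻¹) * 2⁻¹ := by ring
      _ = 2⁻¹ := by rw [ENNReal.mul_inv_cancel hπB.ne' hπBne, one_mul]
  have hkey : t • PA + t • PB ≤ π := by
    rw [Measure.le_iff]
    intro s hs
    have e1 : (t • PA) s = (t * (π A)⁻¹) * π (s ∩ A) := by
      rw [hPAdef, Measure.smul_apply, Measure.smul_apply, smul_eq_mul, smul_eq_mul,
        Measure.restrict_apply hs, mul_assoc]
    have e2 : (t • PB) s = (t * (π B)⁻¹) * π (s ∩ B) := by
      rw [hPBdef, Measure.smul_apply, Measure.smul_apply, smul_eq_mul, smul_eq_mul,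
        Measure.restrict_apply hs, mul_assoc]
    rw [Measure.add_apply, e1, e2]
    calc (t * (π A)⁻¹) * π (s ∩ A) + (t * (π B)⁻¹) * π (s ∩ B)
        ≤ 2⁻¹ * π s + 2⁻¹ * π s :=
          add_le_add (mul_le_mul' hta (measure_mono inter_subset_left))
            (mul_le_mul' htb (measure_mono inter_subset_left))
      _ = π s := by rw [← add_mul, ENNReal.inv_two_add_inv_two, one_mul]
  haveI : IsFiniteMeasure (t • PA + t • PB) := by
    constructor
    rw [Measure.add_apply]
    have e : (t • PA) univ + (t • PB) univ = t + t := by simp [Measure.smul_apply]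
    rw [e]
    exact ENNReal.add_lt_top.2 ⟨htne.lt_top, htne.lt_top⟩
  set σ : Measure (X × Y) := π - (t • PA + t • PB) with hσdef
  have hσeq : σ + (t • PA + t • PB) = π := Measure.sub_add_cancel_of_le hkey
  set γ1 : Measure (X × Y) := (PA.map Prod.fst).prod (PB.map Prod.snd) with hγ1def
  set γ2 : Measure (X × Y) := (PB.map Prod.fst).prod (PA.map Prod.snd) with hγ2def
  haveI iPA1 : IsProbabilityMeasure (PA.map Prod.fst) :=
    Measure.isProbabilityMeasure_map measurable_fst.aemeasurable
  haveI iPA2 : IsProbabilityMeasure (PA.map Prod.snd) :=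
    Measure.isProbabilityMeasure_map measurable_snd.aemeasurable
  haveI iPB1 : IsProbabilityMeasure (PB.map Prod.fst) :=
    Measure.isProbabilityMeasure_map measurable_fst.aemeasurable
  haveI iPB2 : IsProbabilityMeasure (PB.map Prod.snd) :=
    Measure.isProbabilityMeasure_map measurable_snd.aemeasurable
  haveI iγ1 : IsProbabilityMeasure γ1 := by rw [hγ1def]; infer_instance
  haveI iγ2 : IsProbabilityMeasure γ2 := by rw [hγ2def]; infer_instance
  set π' : Measure (X × Y) := σ + (t • γ1 + t • γ2) with hπ'def
  have hγ1fst : γ1.map Prod.fst = PA.map Prod.fst := by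
    rw [hγ1def, Measure.map_fst_prod, measure_univ, one_smul]
  have hγ1snd : γ1.map Prod.snd = PB.map Prod.snd := by
    rw [hγ1def, Measure.map_snd_prod, measure_univ, one_smul]
  have hγ2fst : γ2.map Prod.fst = PB.map Prod.fst := by
    rw [hγ2def, Measure.map_fst_prod, measure_univ, one_smul]
  have hγ2snd : γ2.map Prod.snd = PA.map Prod.snd := by
    rw [hγ2def, Measure.map_snd_prod, measure_univ, one_smul]
  have hcoup : IsCoupling π' μ ν := by
    constructor
    · rw [hπ'def, map_mix measurable_fst, hγ1fst, hγ2fst,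
        ← map_mix measurable_fst σ PA PB t, hσeq, hπ.1.1]
    · rw [hπ'def, map_mix measurable_snd, hγ1snd, hγ2snd, add_comm (t • PB.map Prod.snd),
        ← map_mix measurable_snd σ PA PB t, hσeq, hπ.1.2]
  set F : Measure (X × Y) → ℝ≥0∞ := fun ρ => ∫⁻ z, ENNReal.ofReal (c z.1 z.2) ∂ρ with hFdef
  have hmeasc : Measurable fun z : X × Y => ENNReal.ofReal (c z.1 z.2) :=
    hccont.measurable.ennreal_ofReal
  have hFadd : ∀ (σ' a b : Measure (X × Y)),
      F (σ' + (t • a + t • b)) = F σ' + (t * F a + t * F b) := by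
    intro σ' a b
    simp [hFdef, lintegral_add_measure, lintegral_smul_measure]
  have hFπ : F π = F σ + (t * F PA + t * F PB) := by rw [← hσeq, hFadd]
  have hFπ' : F π' = F σ + (t * F γ1 + t * F γ2) := by rw [hπ'def, hFadd]
  have hFσ : F σ ≠ ⊤ := by
    have h1 : F σ ≤ F π := by rw [hFπ]; exact le_add_right le_rfl
    have h2 : F π < ⊤ := by
      show (∫⁻ z : X × Y, ENNReal.ofReal (c z.1 z.2) ∂π) < ⊤
      rw [hπ.2]; exact hT
    exact (h1.trans_lt h2).ne
  have hlowA : ENNReal.ofReal (c p.1 p.2 - ε) ≤ F PA := by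
    refine lintegral_ge_of_bound PA hA hPAA ?_
    intro z hz
    refine ENNReal.ofReal_le_ofReal ?_
    have habs := abs_lt.1 (h11 z.1 hz.1.1 z.2 hz.2.1)
    linarith [habs.1]
  have hlowB : ENNReal.ofReal (c q.1 q.2 - ε) ≤ F PB := by
    refine lintegral_ge_of_bound PB hB hPBB ?_
    intro z hz
    refine ENNReal.ofReal_le_ofReal ?_
    have habs := abs_lt.1 (h22 z.1 hz.1.2 z.2 hz.2.2)
    linarith [habs.1]
  have hmapPA1 : (PA.map Prod.fst) U1 = 1 := by
    rw [Measure.map_apply measurable_fst hU1.measurableSet]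
    refine le_antisymm prob_le_one ?_
    rw [← hPAA]
    exact measure_mono (fun z hz => hz.1)
  have hmapPB2 : (PB.map Prod.snd) V2 = 1 := by
    rw [Measure.map_apply measurable_snd hV2.measurableSet]
    refine le_antisymm prob_le_one ?_
    rw [← hPBB]
    exact measure_mono (fun z hz => hz.2)
  have hmapPB1 : (PB.map Prod.fst) U2 = 1 := by
    rw [Measure.map_apply measurable_fst hU2.measurableSet]
    refine le_antisymm prob_le_one ?_
    rw [← hPBB]
    exact measure_mono (fun z hz => hz.1)
  have hmapPA2 : (PA.map Prod.snd) V1 = 1 := by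
    rw [Measure.map_apply measurable_snd hV1.measurableSet]
    refine le_antisymm prob_le_one ?_
    rw [← hPAA]
    exact measure_mono (fun z hz => hz.2)
  have hγ1S : γ1 (U1 ×ˢ V2) = 1 := by
    rw [hγ1def, Measure.prod_prod, hmapPA1, hmapPB2, one_mul]
  have hγ2S : γ2 (U2 ×ˢ V1) = 1 := by
    rw [hγ2def, Measure.prod_prod, hmapPB1, hmapPA2, one_mul]
  have hγ1le : F γ1 ≤ ENNReal.ofReal (c p.1 q.2 + ε) := by
    refine lintegral_le_of_bound γ1 (hU1.measurableSet.prod hV2.measurableSet) hγ1S hmeasc ?_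
    intro z hz
    refine ENNReal.ofReal_le_ofReal ?_
    have habs := abs_lt.1 (h12 z.1 hz.1.2 z.2 hz.2.1)
    linarith [habs.2]
  have hγ2le : F γ2 ≤ ENNReal.ofReal (c q.1 p.2 + ε) := by
    refine lintegral_le_of_bound γ2 (hU2.measurableSet.prod hV1.measurableSet) hγ2S hmeasc ?_
    intro z hz
    refine ENNReal.ofReal_le_ofReal ?_
    have habs := abs_lt.1 (h21 z.1 hz.1.1 z.2 hz.2.2)
    linarith [habs.2]
  have hstrict : F π' < F π := by
    rw [hFπ', hFπ]
    refine ENNReal.add_lt_add_left hFσ ?_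
    calc t * F γ1 + t * F γ2
        ≤ t * (ENNReal.ofReal (c p.1 q.2 + ε) + ENNReal.ofReal (c q.1 p.2 + ε)) := by
          rw [mul_add]
          exact add_le_add (mul_le_mul_right hγ1le t) (mul_le_mul_right hγ2le t)
      _ = t * ENNReal.ofReal (c p.1 q.2 + c q.1 p.2 + 2 * ε) := by
          rw [← ENNReal.ofReal_add (by linarith [hc0 p.1 q.2]) (by linarith [hc0 q.1 p.2])]
          ring_nf
      _ < t * ENNReal.ofReal (c p.1 p.2 + c q.1 q.2 - 2 * ε) := by
          rw [ENNReal.mul_lt_mul_iff_right ht0 htne,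
            ENNReal.ofReal_lt_ofReal_iff (by linarith [hc0 p.1 q.2, hc0 q.1 p.2])]
          linarith
      _ ≤ t * (ENNReal.ofReal (c p.1 p.2 - ε) + ENNReal.ofReal (c q.1 q.2 - ε)) := by
          refine mul_le_mul_right ?_ t
          have he : c p.1 p.2 + c q.1 q.2 - 2 * ε = (c p.1 p.2 - ε) + (c q.1 q.2 - ε) := by
            ring
          rw [he]
          exact ENNReal.ofReal_add_le
      _ ≤ t * F PA + t * F PB := by
          rw [← mul_add]
          exact mul_le_mul_right (add_le_add hlowA hlowB) t
  have hTle : transportCost c μ ν ≤ F π' :=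
    iInf_le_of_le π' (iInf_le_of_le hcoup le_rfl)
  have hfinal : transportCost c μ ν < transportCost c μ ν :=
    calc transportCost c μ ν ≤ F π' := hTle
      _ < F π := hstrict
      _ = transportCost c μ ν := hπ.2
  exact absurd hfinal (lt_irrefl _)

lemma exists_reals_of_add_lt {a b : EReal} {t : ℝ} (ha : a ≠ ⊤) (hb : b ≠ ⊤)
    (h : a + b < (t : EReal)) :
    ∃ r s : ℝ, a < (r : EReal) ∧ b < (s : EReal) ∧ r + s < t := by
  rcases eq_or_ne a ⊥ with ha' | ha'
  · obtain ⟨s, hs, -⟩ := EReal.exists_between_coe_real (lt_top_iff_ne_top.2 hb)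
    exact ⟨t - s - 1, s, by rw [ha']; exact EReal.bot_lt_coe _, hs, by linarith⟩
  · rcases eq_or_ne b ⊥ with hb' | hb'
    · obtain ⟨r, hr, -⟩ := EReal.exists_between_coe_real (lt_top_iff_ne_top.2 ha)
      exact ⟨r, t - r - 1, hr, by rw [hb']; exact EReal.bot_lt_coe _, by linarith⟩
    · lift a to ℝ using ⟨ha, ha'⟩
      lift b to ℝ using ⟨hb, hb'⟩
      have hab : a + b < t := by exact_mod_cast h
      refine ⟨a + (t - a - b) / 3, b + (t - a - b) / 3, ?_, ?_, by linarith⟩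
      · exact_mod_cast (by linarith : a < a + (t - a - b) / 3)
      · exact_mod_cast (by linarith : b < b + (t - a - b) / 3)

lemma add_sub_le_coe {a : EReal} (ha : a ≠ ⊤) (r : ℝ) :
    a + ((r : EReal) - a) ≤ (r : EReal) := by
  rcases eq_or_ne a ⊥ with h | h
  · rw [h]; simp
  · lift a to ℝ using ⟨ha, h⟩
    rw [← EReal.coe_sub, ← EReal.coe_add]
    exact EReal.coe_le_coe_iff.2 (by linarith)

end AuxLemmas

/-- **Lemma: interior regularity.** If mass near `x` is sent
towards infinity and the cost along a perturbed sequence drops to `-∞`, every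
Kantorovich potential is `-∞` on the asymptotic region of dominated cost
`C_∞ = limsup_n C(x̃_n, y_n)`; if moreover `C_∞` contains an open set touching
`x`, then `x` is a boundary point of `supp μ`. -/
theorem stmt14 {X Y : Type*}
    [TopologicalSpace X] [PolishSpace X] [MeasurableSpace X] [BorelSpace X]
    [TopologicalSpace Y] [PolishSpace Y] [MeasurableSpace Y] [BorelSpace Y]
    (c : X → Y → ℝ) (hc0 : ∀ x y, 0 ≤ c x y)
    (hccont : Continuous fun p : X × Y => c p.1 p.2)
    (μ : Measure X) (ν : Measure Y) [IsProbabilityMeasure μ] [IsProbabilityMeasure ν]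
    (hT : transportCost c μ ν < ⊤)
    (π : Measure (X × Y)) (hπ : IsOptimalPlan c μ ν π)
    (x : X) (hx : x ∈ msupport μ)
    (xs : ℕ → X) (ys : ℕ → Y)
    (hmem : ∀ n, (xs n, ys n) ∈ msupport π)
    (hxs : Tendsto xs atTop (nhds x))
    -- `y_n → ∞`: every compact set contains only finitely many of the `y_n`
    (hys : ∀ K : Set Y, IsCompact K → {n : ℕ | ys n ∈ K}.Finite)
    (xt : ℕ → X) (hxt : Tendsto xt atTop (nhds x))
    -- condition 1: `c(x̃_n, y_n) - c(x_n, y_n) → -∞`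
    (h1 : Tendsto (fun n => c (xt n) (ys n) - c (xs n) (ys n)) atTop atBot) :
    (∀ f : X → EReal, IsKantorovichPotential c μ ν f →
      ∀ x' ∈ {x' : X | {n : ℕ | c x' (ys n) ≤ c (xt n) (ys n)}.Infinite}, f x' = ⊥) ∧
    -- condition 2 implies that `x` is a boundary point of `supp μ`
    ((∃ U : Set X, IsOpen U ∧
        U ⊆ {x' : X | {n : ℕ | c x' (ys n) ≤ c (xt n) (ys n)}.Infinite} ∧
        x ∈ closure U) →
      x ∈ frontier (msupport μ)) := by
  haveI hπprob : IsProbabilityMeasure π := isProbabilityMeasure_of_coupling hπ.1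
  -- Part 1
  have part1 : ∀ f : X → EReal, IsKantorovichPotential c μ ν f →
      ∀ x' ∈ {x' : X | {n : ℕ | c x' (ys n) ≤ c (xt n) (ys n)}.Infinite}, f x' = ⊥ := by
    rintro f ⟨⟨⟨g, hgtop, hfg⟩, hftop, x0, hfx0⟩, hae⟩ x' hx'
    set fc : Y → EReal := cTransform c f with hfcdef
    have hfc_le : ∀ (u : X) (v : Y), fc v ≤ ((c u v : ℝ) : EReal) - f u := by
      intro u v
      exact iInf_le (fun u' => ((c u' v : ℝ) : EReal) - f u') u
    have hf_le : ∀ (u : X) (v : Y), f u ≤ ((c u v : ℝ) : EReal) - g v := by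
      intro u v
      rw [hfg]
      exact iInf_le (fun v' => ((c u v' : ℝ) : EReal) - g v') v
    have hfc_ne_top : ∀ v, fc v ≠ ⊤ := by
      intro v hv
      obtain ⟨w, hw⟩ : ∃ w : ℝ, f x0 = (w : EReal) :=
        ⟨_, (EReal.coe_toReal (hftop x0) hfx0).symm⟩
      have h1 : fc v ≤ ((c x0 v : ℝ) : EReal) - f x0 := hfc_le x0 v
      rw [hv, hw, ← EReal.coe_sub, top_le_iff] at h1
      exact (EReal.coe_ne_top _) h1
    have hle : ∀ (u : X) (v : Y), f u + fc v ≤ ((c u v : ℝ) : EReal) := by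
      intro u v
      calc f u + fc v ≤ f u + (((c u v : ℝ) : EReal) - f u) :=
            add_le_add_right (hfc_le u v) _
        _ ≤ ((c u v : ℝ) : EReal) := add_sub_le_coe (hftop u) _
    set D : Set (X × Y) := {z | ((c z.1 z.2 : ℝ) : EReal) ≤ f z.1 + fc z.2} with hDdef
    have hDco : IsOpen Dᶜ := by
      rw [isOpen_iff_forall_mem_open]
      rintro ⟨u0, v0⟩ hz
      have hlt : f u0 + fc v0 < ((c u0 v0 : ℝ) : EReal) := not_le.1 hz
      obtain ⟨r1, r2, hr1, hr2, hrs⟩ :=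
        exists_reals_of_add_lt (hftop u0) (hfc_ne_top v0) hlt
      -- a neighborhood where f < r1
      have hN1 : ∃ N1 : Set X, IsOpen N1 ∧ u0 ∈ N1 ∧ ∀ u ∈ N1, f u < (r1 : EReal) := by
        have h0 : (⨅ v, ((c u0 v : ℝ) : EReal) - g v) < (r1 : EReal) := by
          rw [hfg] at hr1; exact hr1
        obtain ⟨y0, hy0⟩ := iInf_lt_iff.1 h0
        have hg0 : g y0 ≠ ⊥ := by
          intro hbb
          rw [hbb] at hy0
          simp at hy0
        obtain ⟨w, hw⟩ : ∃ w : ℝ, g y0 = (w : EReal) :=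
          ⟨_, (EReal.coe_toReal (hgtop y0) hg0).symm⟩
        rw [hw, ← EReal.coe_sub, EReal.coe_lt_coe_iff] at hy0
        have hcont : Continuous fun u => c u y0 :=
          hccont.comp (continuous_id.prodMk continuous_const)
        refine ⟨{u | c u y0 < r1 + w}, isOpen_lt hcont continuous_const,
          by simp only [mem_setOf_eq]; linarith, ?_⟩
        intro u hu
        calc f u ≤ ((c u y0 : ℝ) : EReal) - g y0 := hf_le u y0
          _ = ((c u y0 - w : ℝ) : EReal) := by rw [hw, EReal.coe_sub]
          _ < (r1 : EReal) := EReal.coe_lt_coe_iff.2 (by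
              have := hu
              simp only [mem_setOf_eq] at this
              linarith)
      have hN2 : ∃ N2 : Set Y, IsOpen N2 ∧ v0 ∈ N2 ∧ ∀ v ∈ N2, fc v < (r2 : EReal) := by
        obtain ⟨x1, hx1⟩ := iInf_lt_iff.1 (hr2 : (⨅ u, ((c u v0 : ℝ) : EReal) - f u) < _)
        have hf1 : f x1 ≠ ⊥ := by
          intro hbb
          rw [hbb] at hx1
          simp at hx1
        obtain ⟨w1, hw1⟩ : ∃ w1 : ℝ, f x1 = (w1 : EReal) :=
          ⟨_, (EReal.coe_toReal (hftop x1) hf1).symm⟩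
        rw [hw1, ← EReal.coe_sub, EReal.coe_lt_coe_iff] at hx1
        have hcont : Continuous fun v => c x1 v :=
          hccont.comp (continuous_const.prodMk continuous_id)
        refine ⟨{v | c x1 v < r2 + w1}, isOpen_lt hcont continuous_const,
          by simp only [mem_setOf_eq]; linarith, ?_⟩
        intro v hv
        calc fc v ≤ ((c x1 v : ℝ) : EReal) - f x1 := hfc_le x1 v
          _ = ((c x1 v - w1 : ℝ) : EReal) := by rw [hw1, EReal.coe_sub]
          _ < (r2 : EReal) := EReal.coe_lt_coe_iff.2 (by
              have := hv
              simp only [mem_setOf_eq] at this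
              linarith)
      obtain ⟨N1, hN1o, hN1m, hN1p⟩ := hN1
      obtain ⟨N2, hN2o, hN2m, hN2p⟩ := hN2
      refine ⟨(N1 ×ˢ N2) ∩ {z : X × Y | r1 + r2 < c z.1 z.2}, ?_, ?_, ?_⟩
      · rintro ⟨u, v⟩ ⟨⟨hu, hv⟩, hz3⟩
        simp only [mem_setOf_eq] at hz3
        have hsum : f u + fc v < ((r1 + r2 : ℝ) : EReal) := by
          rw [EReal.coe_add]
          exact EReal.add_lt_add (hN1p u hu) (hN2p v hv)
        have hfin : f u + fc v < ((c u v : ℝ) : EReal) :=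
          hsum.trans (EReal.coe_lt_coe_iff.2 hz3)
        simp only [hDdef, mem_compl_iff, mem_setOf_eq, not_le]
        exact hfin
      · exact (hN1o.prod hN2o).inter (isOpen_lt continuous_const hccont)
      · exact ⟨mk_mem_prod hN1m hN2m, by simp only [mem_setOf_eq]; linarith⟩
    have hDnull : π Dᶜ = 0 := by
      have hae' := hae π hπ
      rw [ae_iff] at hae'
      refine measure_mono_null ?_ hae'
      intro z hz
      simp only [hDdef, mem_compl_iff, mem_setOf_eq, not_le] at hz
      simp only [mem_setOf_eq]
      intro heq
      exact absurd heq hz.ne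
    have hsupp_sub : msupport π ⊆ D := by
      intro z hz
      by_contra hzD
      exact absurd (hz Dᶜ hDco hzD) (by rw [hDnull]; exact lt_irrefl 0)
    have heqn : ∀ n, f (xs n) + fc (ys n) = ((c (xs n) (ys n) : ℝ) : EReal) :=
      fun n => le_antisymm (hle _ _) (hsupp_sub (hmem n))
    have hfxs_ne_bot : ∀ n, f (xs n) ≠ ⊥ := by
      intro n hbb
      have h := heqn n
      rw [hbb] at h
      simp at h
    have ha : ∀ n, f (xs n) = (((f (xs n)).toReal : ℝ) : EReal) :=
      fun n => (EReal.coe_toReal (hftop _) (hfxs_ne_bot n)).symm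
    set a : ℕ → ℝ := fun n => (f (xs n)).toReal with hadef
    have hfcval : ∀ n, fc (ys n) = ((c (xs n) (ys n) - a n : ℝ) : EReal) := by
      intro n
      have h := heqn n
      rw [ha n] at h
      have hfcb : fc (ys n) ≠ ⊥ := by
        intro hbb
        rw [hbb] at h
        simp at h
      obtain ⟨b, hbv⟩ : ∃ b : ℝ, fc (ys n) = (b : EReal) :=
        ⟨_, (EReal.coe_toReal (hfc_ne_top _) hfcb).symm⟩
      rw [hbv] at h ⊢
      rw [← EReal.coe_add, EReal.coe_eq_coe_iff] at h
      exact EReal.coe_eq_coe_iff.2 (by linarith)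
    -- an upper bound for a n
    have hfx_ne_top : (⨅ v, ((c x v : ℝ) : EReal) - g v) ≠ ⊤ := by
      have hh := hftop x
      rw [hfg] at hh
      exact hh
    have hy0 : ∃ y0, ((c x y0 : ℝ) : EReal) - g y0 ≠ ⊤ := by
      by_contra hall
      push_neg at hall
      exact hfx_ne_top (iInf_eq_top.2 hall)
    obtain ⟨y0, hy0⟩ := hy0
    have hg0 : g y0 ≠ ⊥ := by
      intro hbb
      rw [hbb] at hy0
      simp at hy0
    obtain ⟨w, hw⟩ : ∃ w : ℝ, g y0 = (w : EReal) :=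
      ⟨_, (EReal.coe_toReal (hgtop y0) hg0).symm⟩
    have haub : ∀ n, a n ≤ c (xs n) y0 - w := by
      intro n
      have h1 : f (xs n) ≤ ((c (xs n) y0 : ℝ) : EReal) - g y0 := hf_le _ y0
      rw [ha n, hw, ← EReal.coe_sub, EReal.coe_le_coe_iff] at h1
      exact h1
    -- conclude
    by_contra hbot
    obtain ⟨b, hb⟩ : ∃ b : ℝ, f x' = (b : EReal) :=
      ⟨_, (EReal.coe_toReal (hftop x') hbot).symm⟩
    have hchain : ∀ n, b ≤ c x' (ys n) - c (xs n) (ys n) + a n := by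
      intro n
      have h1 : fc (ys n) ≤ ((c x' (ys n) : ℝ) : EReal) - f x' := hfc_le x' _
      rw [hfcval n, hb, ← EReal.coe_sub, EReal.coe_le_coe_iff] at h1
      linarith
    have hry : Tendsto (fun n => c (xs n) y0) atTop (nhds (c x y0)) := by
      have h2 : Tendsto (fun n => ((xs n, y0) : X × Y)) atTop (nhds (x, y0)) :=
        hxs.prodMk_nhds tendsto_const_nhds
      exact (hccont.tendsto (x, y0)).comp h2
    have hev1 : ∀ᶠ n in atTop, c (xs n) y0 < c x y0 + 1 :=
      hry.eventually (Filter.Tendsto.eventually_lt_const (by linarith) tendsto_id)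
    have hev2 : ∀ᶠ n in atTop,
        c (xt n) (ys n) - c (xs n) (ys n) < b - (c x y0 + 1 - w) :=
      h1.eventually (eventually_lt_atBot _)
    obtain ⟨N, hN⟩ := (hev1.and hev2).exists_forall_of_atTop
    obtain ⟨n, hnS, hn⟩ := Set.Infinite.exists_gt hx' N
    have hcc : c x' (ys n) ≤ c (xt n) (ys n) := hnS
    have h3 := (hN n hn.le).1
    have h4 := (hN n hn.le).2
    have h5 := hchain n
    have h6 := haub n
    linarith
  refine ⟨part1, ?_⟩
  -- Part 2
  rintro ⟨U, hUopen, hUsub, hxcl⟩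
  have hclosed : IsClosed (msupport μ) := isClosed_msupport μ
  rw [frontier, hclosed.closure_eq]
  refine ⟨hx, fun hint => ?_⟩
  obtain ⟨w, hwint, hwU⟩ :=
    mem_closure_iff.1 hxcl (interior (msupport μ)) isOpen_interior hint
  set W : Set X := U ∩ interior (msupport μ) with hWdef
  have hWopen : IsOpen W := hUopen.inter isOpen_interior
  have hμW : 0 < μ W := (interior_subset hwint) W hWopen ⟨hwU, hwint⟩
  have hπW : 0 < π (W ×ˢ (univ : Set Y)) := by
    have hpre : Prod.fst ⁻¹' W = W ×ˢ (univ : Set Y) := by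
      ext z; simp
    calc (0 : ℝ≥0∞) < μ W := hμW
      _ = π.map Prod.fst W := by rw [hπ.1.1]
      _ = π (Prod.fst ⁻¹' W) := Measure.map_apply measurable_fst hWopen.measurableSet
      _ = π (W ×ˢ (univ : Set Y)) := by rw [hpre]
  obtain ⟨z, hzW, hzsupp⟩ := exists_mem_msupport π hπW
  have hzU : z.1 ∈ U := hzW.1.1
  have hS : {n : ℕ | c z.1 (ys n) ≤ c (xt n) (ys n)}.Infinite := hUsub hzU
  have hmono : ∀ n, c z.1 z.2 + c (xs n) (ys n) ≤ c z.1 (ys n) + c (xs n) z.2 :=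
    fun n => two_point_mono c hc0 hccont μ ν hT π hπ z (xs n, ys n) hzsupp (hmem n)
  have hry : Tendsto (fun n => c (xs n) z.2) atTop (nhds (c x z.2)) := by
    have h2 : Tendsto (fun n => ((xs n, z.2) : X × Y)) atTop (nhds (x, z.2)) :=
      hxs.prodMk_nhds tendsto_const_nhds
    exact (hccont.tendsto (x, z.2)).comp h2
  have hev1 : ∀ᶠ n in atTop, c (xs n) z.2 < c x z.2 + 1 :=
    hry.eventually (Filter.Tendsto.eventually_lt_const (by linarith) tendsto_id)
  have hev2 : ∀ᶠ n in atTop,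
      c (xt n) (ys n) - c (xs n) (ys n) < -(c x z.2 + 1) :=
    h1.eventually (eventually_lt_atBot _)
  obtain ⟨N, hN⟩ := (hev1.and hev2).exists_forall_of_atTop
  obtain ⟨n, hnS, hn⟩ := Set.Infinite.exists_gt hS N
  have hcc : c z.1 (ys n) ≤ c (xt n) (ys n) := hnS
  have h3 := (hN n hn.le).1
  have h4 := (hN n hn.le).2
  have h5 := hmono n
  have h6 := hc0 z.1 z.2
  linarith
end

section
/- Let X = Y be Polish, μ = ν ∈ P(X) with supp μ = X₁ ∪ X₂, and let c : X × X → [0,∞) be continuous and symmetric with c(x,x) = 0 for all x ∈ X. If Δ = inf{c(x₁,x₂) : x₁ ∈ X₁, x₂ ∈ X₂} > 0, then for all a, b ∈ ℝ with |a − b| ≤ Δ there exists a Kantorovich potential f_{a,b} ∈ S_c(μ,μ) such that f_{a,b} = a on X₁ and f_{a,b} = b on X₂. -/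
open MeasureTheory Filter Set Topology
open scoped ENNReal NNReal Manifold

/-- Non-uniqueness under strictly cost-separated components:
if `supp μ = X₁ ∪ X₂` with `Δ = inf c(X₁, X₂) > 0`, then for all `a, b` with
`|a - b| ≤ Δ` there is a Kantorovich potential equal to `a` on `X₁` and `b` on
`X₂`. -/
theorem stmt18 {X : Type*}
    [TopologicalSpace X] [PolishSpace X] [MeasurableSpace X] [BorelSpace X]
    (c : X → X → ℝ) (hc0 : ∀ x y, 0 ≤ c x y)
    (hccont : Continuous fun p : X × X => c p.1 p.2)
    (hcsymm : ∀ x y, c x y = c y x) (hcdiag : ∀ x, c x x = 0)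
    (μ : Measure X) [IsProbabilityMeasure μ]
    (X₁ X₂ : Set X) (hsupp : msupport μ = X₁ ∪ X₂)
    (hΔ : 0 < sInf {r : ℝ | ∃ x₁ ∈ X₁, ∃ x₂ ∈ X₂, c x₁ x₂ = r})
    (a b : ℝ) (hab : |a - b| ≤ sInf {r : ℝ | ∃ x₁ ∈ X₁, ∃ x₂ ∈ X₂, c x₁ x₂ = r}) :
    ∃ f : X → EReal, IsKantorovichPotential c μ μ f ∧
      (∀ x ∈ X₁, f x = (a : EReal)) ∧ (∀ x ∈ X₂, f x = (b : EReal)) := by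
  classical
  set Δ := sInf {r : ℝ | ∃ x₁ ∈ X₁, ∃ x₂ ∈ X₂, c x₁ x₂ = r} with hΔdef
  have hbdd : BddBelow {r : ℝ | ∃ x₁ ∈ X₁, ∃ x₂ ∈ X₂, c x₁ x₂ = r} := by
    refine ⟨0, ?_⟩
    rintro r ⟨x₁, -, x₂, -, rfl⟩
    exact hc0 _ _
  have hΔle : ∀ x₁ ∈ X₁, ∀ x₂ ∈ X₂, Δ ≤ c x₁ x₂ := fun x₁ h1 x₂ h2 =>
    csInf_le hbdd ⟨x₁, h1, x₂, h2, rfl⟩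
  have hX₁ne : X₁.Nonempty := by
    rcases X₁.eq_empty_or_nonempty with h | h
    · exfalso
      have : {r : ℝ | ∃ x₁ ∈ X₁, ∃ x₂ ∈ X₂, c x₁ x₂ = r} = ∅ := by
        ext r; simp [h]
      rw [hΔdef, this, Real.sInf_empty] at hΔ
      exact lt_irrefl _ hΔ
    · exact h
  have hX₂ne : X₂.Nonempty := by
    rcases X₂.eq_empty_or_nonempty with h | h
    · exfalso
      have : {r : ℝ | ∃ x₁ ∈ X₁, ∃ x₂ ∈ X₂, c x₁ x₂ = r} = ∅ := by
        ext r; simp [h]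
      rw [hΔdef, this, Real.sInf_empty] at hΔ
      exact lt_irrefl _ hΔ
    · exact h
  have hdisj : ∀ x, x ∈ X₁ → x ∈ X₂ → False := by
    intro x h1 h2
    have := hΔle x h1 x h2
    rw [hcdiag] at this
    linarith
  have hab1 : a - b ≤ Δ := (abs_le.mp hab).2
  have hab2 : b - a ≤ Δ := by
    have := (abs_le.mp hab).1; linarith
  obtain ⟨xone, hxone⟩ := hX₁ne
  -- the dual potential g and the candidate f
  set G : X → ℝ := fun y => if y ∈ X₁ then -a else -b with hGdef
  set g : X → EReal := fun y => if y ∈ X₁ ∪ X₂ then ((G y : ℝ) : EReal) else ⊥ with hgdef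
  set f : X → EReal := cTransformY c g with hfdef
  have hgX₁ : ∀ y ∈ X₁, g y = (((-a : ℝ)) : EReal) := by
    intro y hy
    simp only [hgdef, hGdef, Set.mem_union, hy, true_or, if_true, if_pos hy]
  have hgX₂ : ∀ y ∈ X₂, g y = (((-b : ℝ)) : EReal) := by
    intro y hy
    have hy1 : y ∉ X₁ := fun h => hdisj y h hy
    simp only [hgdef, hGdef, Set.mem_union, hy, or_true, if_true, if_neg hy1]
  -- each term of the inf defining f is ≥ min a b
  have hterm_ge : ∀ x y, ((min a b : ℝ) : EReal) ≤ ((c x y : ℝ) : EReal) - g y := by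
    intro x y
    by_cases hy : y ∈ X₁ ∪ X₂
    · rcases hy with hy | hy
      · rw [hgX₁ y hy, ← EReal.coe_sub, EReal.coe_le_coe_iff]
        have := hc0 x y
        have : a ≤ c x y - -a := by linarith
        exact le_trans (min_le_left a b) this
      · rw [hgX₂ y hy, ← EReal.coe_sub, EReal.coe_le_coe_iff]
        have := hc0 x y
        have : b ≤ c x y - -b := by linarith
        exact le_trans (min_le_right a b) this
    · simp only [hgdef, if_neg hy, EReal.coe_sub_bot, le_top]
  have hf_le₁ : ∀ x, ∀ y ∈ X₁, f x ≤ ((c x y + a : ℝ) : EReal) := by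
    intro x y hy
    have : f x ≤ ((c x y : ℝ) : EReal) - g y := iInf_le _ y
    rw [hgX₁ y hy, ← EReal.coe_sub] at this
    convert this using 2
    ring
  have hf_le₂ : ∀ x, ∀ y ∈ X₂, f x ≤ ((c x y + b : ℝ) : EReal) := by
    intro x y hy
    have : f x ≤ ((c x y : ℝ) : EReal) - g y := iInf_le _ y
    rw [hgX₂ y hy, ← EReal.coe_sub] at this
    convert this using 2
    ring
  have hf_ge : ∀ x, ((min a b : ℝ) : EReal) ≤ f x := fun x => le_iInf (hterm_ge x)
  have hf_ne_top : ∀ x, f x ≠ ⊤ := by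
    intro x
    exact ((hf_le₁ x xone hxone).trans_lt (EReal.coe_lt_top _)).ne
  have hf_ne_bot : ∀ x, f x ≠ ⊥ := by
    intro x
    exact ((EReal.bot_lt_coe _).trans_le (hf_ge x)).ne'
  have hfX₁ : ∀ x ∈ X₁, f x = (a : EReal) := by
    intro x hx
    refine le_antisymm ?_ ?_
    · have := hf_le₁ x x hx
      rwa [hcdiag, zero_add] at this
    · refine le_iInf fun y => ?_
      by_cases hy : y ∈ X₁ ∪ X₂
      · rcases hy with hy | hy
        · rw [hgX₁ y hy, ← EReal.coe_sub, EReal.coe_le_coe_iff]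
          have := hc0 x y; linarith
        · rw [hgX₂ y hy, ← EReal.coe_sub, EReal.coe_le_coe_iff]
          have := hΔle x hx y hy; linarith
      · simp only [hgdef, if_neg hy, EReal.coe_sub_bot, le_top]
  have hfX₂ : ∀ x ∈ X₂, f x = (b : EReal) := by
    intro x hx
    refine le_antisymm ?_ ?_
    · have := hf_le₂ x x hx
      rwa [hcdiag, zero_add] at this
    · refine le_iInf fun y => ?_
      by_cases hy : y ∈ X₁ ∪ X₂
      · rcases hy with hy | hy
        · rw [hgX₁ y hy, ← EReal.coe_sub, EReal.coe_le_coe_iff]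
          have h' := hΔle y hy x hx
          rw [hcsymm x y]; linarith
        · rw [hgX₂ y hy, ← EReal.coe_sub, EReal.coe_le_coe_iff]
          have := hc0 x y; linarith
      · simp only [hgdef, if_neg hy, EReal.coe_sub_bot, le_top]
  -- the c-transform of f on X₁ and X₂
  have hfc₁ : ∀ y ∈ X₁, cTransform c f y = (((-a : ℝ)) : EReal) := by
    intro y hy
    refine le_antisymm ?_ ?_
    · have h1 : cTransform c f y ≤ ((c y y : ℝ) : EReal) - f y := iInf_le _ y
      rw [hcdiag, hfX₁ y hy, show ((0 : ℝ) : EReal) - (a : EReal) = (((-a : ℝ)) : EReal) by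
        rw [← EReal.coe_sub]; norm_num] at h1
      exact h1
    · refine le_iInf fun x => ?_
      obtain ⟨r, hr⟩ : ∃ r : ℝ, f x = (r : EReal) :=
        ⟨(f x).toReal, (EReal.coe_toReal (hf_ne_top x) (hf_ne_bot x)).symm⟩
      rw [hr, ← EReal.coe_sub, EReal.coe_le_coe_iff]
      have h2 := hf_le₁ x y hy
      rw [hr, EReal.coe_le_coe_iff] at h2
      linarith
  have hfc₂ : ∀ y ∈ X₂, cTransform c f y = (((-b : ℝ)) : EReal) := by
    intro y hy
    refine le_antisymm ?_ ?_
    · have h1 : cTransform c f y ≤ ((c y y : ℝ) : EReal) - f y := iInf_le _ y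
      rw [hcdiag, hfX₂ y hy, show ((0 : ℝ) : EReal) - (b : EReal) = (((-b : ℝ)) : EReal) by
        rw [← EReal.coe_sub]; norm_num] at h1
      exact h1
    · refine le_iInf fun x => ?_
      obtain ⟨r, hr⟩ : ∃ r : ℝ, f x = (r : EReal) :=
        ⟨(f x).toReal, (EReal.coe_toReal (hf_ne_top x) (hf_ne_bot x)).symm⟩
      rw [hr, ← EReal.coe_sub, EReal.coe_le_coe_iff]
      have h2 := hf_le₂ x y hy
      rw [hr, EReal.coe_le_coe_iff] at h2
      linarith
  -- f is c-concave
  have hconc : CConcave c f := by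
    refine ⟨⟨g, ?_, rfl⟩, hf_ne_top, ⟨xone, hf_ne_bot _⟩⟩
    intro y
    by_cases hy : y ∈ X₁ ∪ X₂
    · simp only [hgdef, if_pos hy]
      exact (EReal.coe_lt_top _).ne
    · simp only [hgdef, if_neg hy]
      exact bot_ne_top
  -- the transport cost is zero
  have hmeasc : Measurable fun p : X × X => ENNReal.ofReal (c p.1 p.2) :=
    hccont.measurable.ennreal_ofReal
  have hdiagm : Measurable fun x : X => (x, x) := measurable_id.prodMk measurable_id
  have hπ₀coupling : IsCoupling (μ.map fun x : X => (x, x)) μ μ := by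
    constructor
    · rw [Measure.map_map measurable_fst hdiagm]
      have h : (Prod.fst ∘ fun x : X => (x, x)) = id := rfl
      rw [h, Measure.map_id]
    · rw [Measure.map_map measurable_snd hdiagm]
      have h : (Prod.snd ∘ fun x : X => (x, x)) = id := rfl
      rw [h, Measure.map_id]
  have hcost0 : transportCost c μ μ = 0 := by
    refine le_antisymm ?_ zero_le
    have h1 : transportCost c μ μ ≤
        ∫⁻ p, ENNReal.ofReal (c p.1 p.2) ∂(μ.map fun x : X => (x, x)) := by
      unfold transportCost
      refine iInf_le_of_le (μ.map fun x : X => (x, x)) ?_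
      exact iInf_le _ hπ₀coupling
    refine h1.trans ?_
    rw [lintegral_map hmeasc hdiagm]
    simp [hcdiag]
  -- the complement of the support of μ is null
  have hsupp_closed : IsClosed (msupport μ) := by
    rw [← isOpen_compl_iff]
    refine isOpen_iff_forall_mem_open.mpr fun x hx => ?_
    simp only [msupport, Set.mem_compl_iff, Set.mem_setOf_eq, not_forall] at hx
    obtain ⟨U, hUopen, hxU, hU0⟩ := hx
    refine ⟨U, fun u hu hmem => ?_, hUopen, hxU⟩
    exact hU0 (hmem U hUopen hu)
  have hsupp_null : μ (msupport μ)ᶜ = 0 := by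
    obtain ⟨B, hBcount, -, hBbasis⟩ := TopologicalSpace.exists_countable_basis X
    have hsub : (msupport μ)ᶜ ⊆ ⋃₀ {U ∈ B | μ U = 0} := by
      intro x hx
      simp only [msupport, Set.mem_compl_iff, Set.mem_setOf_eq, not_forall] at hx
      obtain ⟨U, hUopen, hxU, hU0⟩ := hx
      have hU0' : μ U = 0 := by
        by_contra h
        exact hU0 (pos_iff_ne_zero.mpr h)
      obtain ⟨V, hVB, hxV, hVU⟩ := hBbasis.exists_subset_of_mem_open hxU hUopen
      exact ⟨V, ⟨hVB, measure_mono_null hVU hU0'⟩, hxV⟩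
    refine measure_mono_null hsub ?_
    rw [measure_sUnion_null_iff (hBcount.mono (Set.sep_subset _ _))]
    exact fun U hU => hU.2
  refine ⟨f, ⟨hconc, ?_⟩, hfX₁, hfX₂⟩
  rintro π ⟨⟨hπ1, hπ2⟩, hπcost⟩
  rw [hcost0] at hπcost
  -- a.e., c vanishes and both coordinates are in the support
  have hae_c : ∀ᵐ p ∂π, c p.1 p.2 = 0 := by
    have h0 : ∀ᵐ p ∂π, ENNReal.ofReal (c p.1 p.2) = 0 :=
      (lintegral_eq_zero_iff hmeasc).mp hπcost
    filter_upwards [h0] with p hp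
    rw [ENNReal.ofReal_eq_zero] at hp
    exact le_antisymm hp (hc0 _ _)
  have hmeas_supp : MeasurableSet (msupport μ) := hsupp_closed.measurableSet
  have hae_1 : ∀ᵐ p ∂π, p.1 ∈ msupport μ := by
    rw [MeasureTheory.ae_iff]
    have : {p : X × X | ¬p.1 ∈ msupport μ} = Prod.fst ⁻¹' (msupport μ)ᶜ := rfl
    rw [this, ← Measure.map_apply measurable_fst hmeas_supp.compl, hπ1]
    exact hsupp_null
  have hae_2 : ∀ᵐ p ∂π, p.2 ∈ msupport μ := by
    rw [MeasureTheory.ae_iff]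
    have : {p : X × X | ¬p.2 ∈ msupport μ} = Prod.snd ⁻¹' (msupport μ)ᶜ := rfl
    rw [this, ← Measure.map_apply measurable_snd hmeas_supp.compl, hπ2]
    exact hsupp_null
  filter_upwards [hae_c, hae_1, hae_2] with p hpc hp1 hp2
  rw [hsupp] at hp1 hp2
  rcases hp1 with hp1 | hp1
  · have hp2' : p.2 ∈ X₁ := by
      rcases hp2 with hp2 | hp2
      · exact hp2
      · exfalso
        have := hΔle p.1 hp1 p.2 hp2
        rw [hpc] at this
        linarith
    rw [hfX₁ _ hp1, hfc₁ _ hp2', hpc, ← EReal.coe_add]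
    norm_num
  · have hp2' : p.2 ∈ X₂ := by
      rcases hp2 with hp2 | hp2
      · exfalso
        have := hΔle p.2 hp2 p.1 hp1
        rw [hcsymm] at this
        rw [hpc] at this
        linarith
      · exact hp2
    rw [hfX₂ _ hp1, hfc₂ _ hp2', hpc, ← EReal.coe_add]
    norm_num
end

section
/- Let X be a smooth manifold without boundary, let M ⊂ X be an open and connected subset, and let f₁, f₂ : M → ℝ be locally Lipschitz (in charts). If the gradients of f₁ and f₂ (computed in charts, at points where both exist) coincide on a set that has full Lebesgue measure in charts of M, then f₁ − f₂ is constant on M. -/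
open MeasureTheory Filter Set Topology
open scoped ENNReal NNReal Manifold

noncomputable section

/-- The model space: `d`-dimensional Euclidean space. -/
abbrev Em (d : ℕ) := EuclideanSpace ℝ (Fin d)

/-- A real Lipschitz function on `ℝ` whose derivative vanishes a.e. on `(0,1)`
satisfies `H 1 ≤ H 0`. -/
lemma aux1d {L : ℝ≥0} {H : ℝ → ℝ} (hH : LipschitzWith L H)
    (hd : ∀ᵐ t : ℝ, t ∈ Set.Ioo (0:ℝ) 1 → HasDerivAt H 0 t) : H 1 ≤ H 0 := by
  rcases eq_or_ne L 0 with hL | hL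
  · have h := hH.dist_le_mul 1 0
    rw [hL] at h
    simp only [NNReal.coe_zero, zero_mul] at h
    have := dist_nonneg (x := H 1) (y := H 0)
    rw [Real.dist_eq] at h
    have : |H 1 - H 0| = 0 := le_antisymm h (abs_nonneg _)
    have := abs_eq_zero.1 this
    linarith
  set u : ℝ → ℝ := fun t => L * t - H t with hu
  have umono : Monotone u := by
    intro s t hst
    have h1 := hH.dist_le_mul t s
    rw [Real.dist_eq, Real.dist_eq, abs_of_nonneg (by linarith : (0:ℝ) ≤ t - s)] at h1
    have h2 : H t - H s ≤ (L:ℝ) * (t - s) := le_trans (le_abs_self _) h1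
    simp only [u]
    nlinarith
  have ucont : Continuous u := (continuous_const.mul continuous_id).sub hH.continuous
  set μ := umono.stieltjesFunction.measure with hμ
  have hst_eq : ∀ x, umono.stieltjesFunction x = u x := by
    intro x
    rw [umono.stieltjesFunction_eq]
    exact umono.continuousWithinAt_Ioi_iff_rightLim_eq.1 ucont.continuousAt.continuousWithinAt
  have hIoc : μ (Set.Ioc 0 1) = ENNReal.ofReal (u 1 - u 0) := by
    rw [StieltjesFunction.measure_Ioc, hst_eq, hst_eq]
  have hae : ∀ᵐ t : ℝ, t ∈ Set.Ioo (0:ℝ) 1 → μ.rnDeriv volume t = ENNReal.ofReal L := by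
    filter_upwards [umono.ae_hasDerivAt, hd, Measure.rnDeriv_lt_top μ volume] with t h1 h2 h3 ht
    have hut : HasDerivAt u ((L:ℝ)) t := by
      have := ((hasDerivAt_id t).const_mul (L:ℝ)).sub (h2 ht)
      simp only [mul_one, sub_zero] at this
      exact this
    have h4 : (μ.rnDeriv volume t).toReal = (L:ℝ) := h1.unique hut
    rw [← ENNReal.ofReal_toReal h3.ne, h4]
  have key : ENNReal.ofReal L ≤ ENNReal.ofReal (u 1 - u 0) := by
    calc ENNReal.ofReal L = ∫⁻ _ in Set.Ioo (0:ℝ) 1, ENNReal.ofReal L ∂volume := by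
            rw [setLIntegral_const]; simp [Real.volume_Ioo]
      _ = ∫⁻ t in Set.Ioo (0:ℝ) 1, μ.rnDeriv volume t ∂volume :=
            (lintegral_congr_ae ((ae_restrict_iff' measurableSet_Ioo).2 hae)).symm
      _ = (volume.withDensity (μ.rnDeriv volume)) (Set.Ioo 0 1) :=
            (withDensity_apply _ measurableSet_Ioo).symm
      _ ≤ μ (Set.Ioo 0 1) := Measure.withDensity_rnDeriv_le μ volume _
      _ ≤ μ (Set.Ioc 0 1) := measure_mono Set.Ioo_subset_Ioc_self
      _ = ENNReal.ofReal (u 1 - u 0) := hIoc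
  by_contra hc
  push_neg at hc
  have hLpos : (0:ℝ) < L := lt_of_le_of_ne L.coe_nonneg (by exact_mod_cast hL.symm)
  have h5 : u 1 - u 0 < (L:ℝ) := by simp only [u]; nlinarith
  exact absurd key (not_le.2 ((ENNReal.ofReal_lt_ofReal_iff hLpos).2 h5))

/-- A Lipschitz function on a convex open set whose derivative vanishes outside a
null set is constant. -/
lemma auxseg {d : ℕ} {K : ℝ≥0} {G : Em d → ℝ} (hG : LipschitzWith K G)
    {B : Set (Em d)} (hB : Convex ℝ B) (hBo : IsOpen B) {N : Set (Em d)}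
    (hN : volume N = 0)
    (hder : ∀ z ∈ B \ N, HasFDerivAt G (0 : Em d →L[ℝ] ℝ) z)
    {x y : Em d} (hx : x ∈ B) (hy : y ∈ B) : G x = G y := by
  set N' := toMeasurable volume N with hN'def
  have hN' : volume N' = 0 := by rw [measure_toMeasurable]; exact hN
  have hN'm : MeasurableSet N' := measurableSet_toMeasurable _ _
  have hder' : ∀ z ∈ B \ N', HasFDerivAt G (0 : Em d →L[ℝ] ℝ) z := fun z hz =>
    hder z ⟨hz.1, fun h => hz.2 (subset_toMeasurable _ _ h)⟩
  set v := y - x with hv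
  -- Fubini
  have hfub : ∀ᵐ w : Em d, volume {t : ℝ | t ∈ Set.Ioo (0:ℝ) 1 ∧ w + t • v ∈ N'} = 0 := by
    set S : Set (Em d × ℝ) := {p | p.2 ∈ Set.Ioo (0:ℝ) 1 ∧ p.1 + p.2 • v ∈ N'} with hS
    have hSm : MeasurableSet S := by
      apply MeasurableSet.inter
      · exact measurable_snd measurableSet_Ioo
      · exact (Continuous.measurable (by fun_prop)) hN'm
    have hS0 : (volume.prod volume) S = 0 := by
      rw [Measure.prod_apply_symm hSm]
      have hslice : ∀ t : ℝ, volume ((fun w : Em d => (w, t)) ⁻¹' S) = 0 := by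
        intro t
        by_cases ht : t ∈ Set.Ioo (0:ℝ) 1
        · have : ((fun w : Em d => (w, t)) ⁻¹' S) = (fun w => w + t • v) ⁻¹' N' := by
            ext w
            simp only [S, Set.mem_preimage, Set.mem_setOf_eq]
            exact ⟨fun hp => hp.2, fun hp => ⟨ht, hp⟩⟩
          rw [this, measure_preimage_add_right volume (t • v) N']
          exact hN'
        · have : ((fun w : Em d => (w, t)) ⁻¹' S) = ∅ := by
            ext w
            simp only [S, Set.mem_preimage, Set.mem_setOf_eq, Set.mem_empty_iff_false, iff_false]
            exact fun hp => ht hp.1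
          simp [this]
      simp only [hslice, lintegral_zero]
    have := (Measure.measure_prod_null hSm).1 hS0
    filter_upwards [this] with w hw
    exact hw
  -- main step for good starting points
  have key : ∀ w : Em d, w ∈ B → w + v ∈ B →
      volume {t : ℝ | t ∈ Set.Ioo (0:ℝ) 1 ∧ w + t • v ∈ N'} = 0 → G (w + v) = G w := by
    intro w hwB hwvB hwnull
    set h : ℝ → ℝ := fun t => G (w + t • v) with hh
    have hline : LipschitzWith ‖v‖₊ (fun t : ℝ => w + t • v) := by
      apply LipschitzWith.of_dist_le_mul
      intro s t
      rw [dist_eq_norm, dist_eq_norm]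
      have : w + s • v - (w + t • v) = (s - t) • v := by module
      rw [this, norm_smul]
      simp [Real.norm_eq_abs, mul_comm]
    have hLip : LipschitzWith (K * ‖v‖₊) h := hG.comp hline
    have haeh : ∀ᵐ t : ℝ, t ∈ Set.Ioo (0:ℝ) 1 → HasDerivAt h 0 t := by
      have h2 : ∀ᵐ t : ℝ, t ∉ {t : ℝ | t ∈ Set.Ioo (0:ℝ) 1 ∧ w + t • v ∈ N'} :=
        (measure_eq_zero_iff_ae_notMem.1 hwnull)
      filter_upwards [h2] with t h2t ht
      have hmem : w + t • v ∈ B := by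
        have := hB hwB hwvB (by linarith [ht.2] : (0:ℝ) ≤ 1 - t)
          (le_of_lt ht.1) (by ring)
        convert this using 1
        module
      have hnot : w + t • v ∉ N' := fun hc => h2t ⟨ht, hc⟩
      have hfd := hder' (w + t • v) ⟨hmem, hnot⟩
      have hl : HasDerivAt (fun t : ℝ => w + t • v) v t := by
        simpa using ((hasDerivAt_id t).smul_const v).const_add w
      have := hfd.comp_hasDerivAt t hl
      simp only [ContinuousLinearMap.zero_apply] at this
      exact this
    have h10 : h 1 ≤ h 0 := aux1d hLip haeh
    have h01 : h 0 ≤ h 1 := by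
      have hneg : LipschitzWith (K * ‖v‖₊) (fun t => -(h t)) := hLip.neg
      have : (fun t => -(h t)) 1 ≤ (fun t => -(h t)) 0 := by
        apply aux1d hneg
        filter_upwards [haeh] with t hht ht
        have := (hht ht).neg
        simp only [neg_zero] at this
        exact this
      simpa using this
    have heq : h 1 = h 0 := le_antisymm h10 h01
    simpa [h] using heq
  -- approximation
  have hxy : x + v = y := by simp [v]
  have main : ∀ ε : ℝ, 0 < ε → |G (x + v) - G x| ≤ ε := by
    intro ε hε
    obtain ⟨δ1, hδ1, hball1⟩ := Metric.isOpen_iff.1 hBo x hx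
    obtain ⟨δ2, hδ2, hball2⟩ := Metric.isOpen_iff.1 hBo y hy
    set δ : ℝ := min (min δ1 δ2) (ε / (2 * K + 1)) with hδdef
    have hδpos : 0 < δ := by
      apply lt_min (lt_min hδ1 hδ2)
      positivity
    -- find good w in ball x δ
    obtain ⟨w, hwball, hwgood⟩ : ∃ w ∈ Metric.ball x δ,
        volume {t : ℝ | t ∈ Set.Ioo (0:ℝ) 1 ∧ w + t • v ∈ N'} = 0 := by
      by_contra hc
      push_neg at hc
      have hsub : Metric.ball x δ ⊆ {w : Em d |
          ¬ volume {t : ℝ | t ∈ Set.Ioo (0:ℝ) 1 ∧ w + t • v ∈ N'} = 0} := by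
        intro w hw; exact hc w hw
      have h0 : volume {w : Em d |
          ¬ volume {t : ℝ | t ∈ Set.Ioo (0:ℝ) 1 ∧ w + t • v ∈ N'} = 0} = 0 := hfub
      have := measure_mono_null hsub h0
      exact absurd this (Metric.measure_ball_pos volume x hδpos).ne'
    have hwB : w ∈ B := hball1 (Metric.ball_subset_ball (le_trans (min_le_left _ _) (min_le_left _ _)) hwball)
    have hwvB : w + v ∈ B := by
      apply hball2
      rw [Metric.mem_ball] at hwball ⊢
      have : dist (w + v) y = dist w x := by
        rw [dist_eq_norm, dist_eq_norm]
        congr 1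
        module
      rw [this]
      exact lt_of_lt_of_le hwball (le_trans (min_le_left _ _) (min_le_right _ _))
    have hkey := key w hwB hwvB hwgood
    have hwx : dist w x < δ := Metric.mem_ball.1 hwball
    have hd1 : |G (x + v) - G (w + v)| ≤ K * δ := by
      have h0 := hG.dist_le_mul (x + v) (w + v)
      have heqd : dist (x + v) (w + v) = dist w x := by
        rw [dist_add_right, dist_comm]
      rw [Real.dist_eq, heqd] at h0
      exact h0.trans (mul_le_mul_of_nonneg_left (le_of_lt hwx) K.coe_nonneg)
    have hd2 : |G w - G x| ≤ K * δ := by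
      have h0 := hG.dist_le_mul w x
      rw [Real.dist_eq] at h0
      exact h0.trans (mul_le_mul_of_nonneg_left (le_of_lt hwx) K.coe_nonneg)
    have hδle : δ ≤ ε / (2 * K + 1) := min_le_right _ _
    have : |G (x + v) - G x| ≤ 2 * K * δ := by
      have t1 := abs_sub_le (G (x + v)) (G (w + v)) (G x)
      have t2 := abs_sub_le (G (w + v)) (G w) (G x)
      have t3 : |G (w + v) - G w| = 0 := by rw [hkey]; simp
      linarith
    refine le_trans this ?_
    calc 2 * (K:ℝ) * δ ≤ (2 * K + 1) * (ε / (2 * K + 1)) := by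
          apply mul_le_mul (by linarith [K.coe_nonneg]) hδle (le_of_lt hδpos) (by positivity)
      _ = ε := by field_simp
  have : |G (x + v) - G x| = 0 := by
    by_contra hc
    have hpos : 0 < |G (x + v) - G x| := lt_of_le_of_ne (abs_nonneg _) (Ne.symm hc)
    have := main (|G (x + v) - G x| / 2) (by linarith)
    linarith
  rw [hxy] at this
  have := abs_eq_zero.1 this
  linarith

/-- Locally Lipschitz functions on an open connected subset of
a smooth manifold whose gradients (in charts) coincide on a set of full Lebesgue
measure in charts differ by a constant. -/
theorem stmt19 {d : ℕ} {X : Type*} [TopologicalSpace X]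
    [ChartedSpace (Em d) X] [IsManifold (𝓡 d) (⊤ : ℕ∞) X]
    (M : Set X) (hMopen : IsOpen M) (hMconn : IsPreconnected M)
    (f₁ f₂ : X → ℝ)
    -- `f₁` and `f₂` are locally Lipschitz on `M` (in charts)
    (hLip₁ : ∀ x ∈ M, ∃ V : Set (Em d), V ∈ nhds (chartAt (Em d) x x) ∧
      ∃ L : ℝ≥0, LipschitzOnWith L (fun v => f₁ ((chartAt (Em d) x).symm v))
        (V ∩ (chartAt (Em d) x) '' ((chartAt (Em d) x).source ∩ M)))
    (hLip₂ : ∀ x ∈ M, ∃ V : Set (Em d), V ∈ nhds (chartAt (Em d) x x) ∧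
      ∃ L : ℝ≥0, LipschitzOnWith L (fun v => f₂ ((chartAt (Em d) x).symm v))
        (V ∩ (chartAt (Em d) x) '' ((chartAt (Em d) x).source ∩ M)))
    -- a set `A` of full Lebesgue measure in charts of `M` on which the
    -- gradients of `f₁` and `f₂` (in charts) exist and coincide
    (A : Set X) (hAM : A ⊆ M)
    (hAfull : ∀ x ∈ M, volume ((chartAt (Em d) x) ''
      (((chartAt (Em d) x).source ∩ M) \ A)) = 0)
    (hgrad : ∀ x ∈ A, ∃ D : Em d →L[ℝ] ℝ,
      HasFDerivWithinAt (fun v => f₁ ((chartAt (Em d) x).symm v)) D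
        ((chartAt (Em d) x) '' ((chartAt (Em d) x).source ∩ M)) (chartAt (Em d) x x) ∧
      HasFDerivWithinAt (fun v => f₂ ((chartAt (Em d) x).symm v)) D
        ((chartAt (Em d) x) '' ((chartAt (Em d) x).source ∩ M)) (chartAt (Em d) x x)) :
    ∃ a : ℝ, ∀ x ∈ M, f₁ x = f₂ x + a := by
  -- Local constancy of f₁ - f₂ on M
  have hloc : ∀ p ∈ M, ∃ W : Set X, IsOpen W ∧ p ∈ W ∧
      ∀ q ∈ W ∩ M, f₁ q - f₂ q = f₁ p - f₂ p := by
    intro p hp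
    set φ := chartAt (Em d) p with hφ
    obtain ⟨V₁, hV₁, L₁, hLipa⟩ := hLip₁ p hp
    obtain ⟨V₂, hV₂, L₂, hLipb⟩ := hLip₂ p hp
    have hOopen : IsOpen (φ '' (φ.source ∩ M)) :=
      φ.isOpen_image_of_subset_source (φ.open_source.inter hMopen) inter_subset_left
    have hpO : φ p ∈ φ '' (φ.source ∩ M) := ⟨p, ⟨mem_chart_source _ p, hp⟩, rfl⟩
    have hnhds : V₁ ∩ V₂ ∩ (φ '' (φ.source ∩ M)) ∈ 𝓝 (φ p) :=
      inter_mem (inter_mem hV₁ hV₂) (hOopen.mem_nhds hpO)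
    obtain ⟨r, hr, hball⟩ := Metric.mem_nhds_iff.1 hnhds
    set B := Metric.ball (φ p) r with hBdef
    set g : Em d → ℝ := fun v => f₁ (φ.symm v) - f₂ (φ.symm v) with hgdef
    have hg : LipschitzOnWith (L₁ + L₂) g B := by
      have h1 : LipschitzOnWith L₁ (fun v => f₁ (φ.symm v)) B :=
        hLipa.mono (fun z hz => ⟨(hball hz).1.1, (hball hz).2⟩)
      have h2 : LipschitzOnWith L₂ (fun v => f₂ (φ.symm v)) B :=
        hLipb.mono (fun z hz => ⟨(hball hz).1.2, (hball hz).2⟩)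
      apply LipschitzOnWith.of_dist_le_mul
      intro a ha b hb
      have e1 := h1.dist_le_mul a ha b hb
      have e2 := h2.dist_le_mul a ha b hb
      rw [Real.dist_eq] at e1 e2 ⊢
      have := abs_sub (f₁ (φ.symm a) - f₁ (φ.symm b)) (f₂ (φ.symm a) - f₂ (φ.symm b))
      simp only [g]
      push_cast
      have habs : |f₁ (φ.symm a) - f₂ (φ.symm a) - (f₁ (φ.symm b) - f₂ (φ.symm b))| ≤
          |f₁ (φ.symm a) - f₁ (φ.symm b)| + |f₂ (φ.symm a) - f₂ (φ.symm b)| := by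
        have := abs_sub_abs_le_abs_sub (f₁ (φ.symm a) - f₁ (φ.symm b))
          (f₂ (φ.symm a) - f₂ (φ.symm b))
        calc |f₁ (φ.symm a) - f₂ (φ.symm a) - (f₁ (φ.symm b) - f₂ (φ.symm b))|
            = |(f₁ (φ.symm a) - f₁ (φ.symm b)) - (f₂ (φ.symm a) - f₂ (φ.symm b))| := by ring_nf
          _ ≤ _ := abs_sub _ _
      nlinarith [dist_nonneg (x := a) (y := b)]
    obtain ⟨G, hGlip, hGeq⟩ := hg.extend_real
    set N := B ∩ (φ '' ((φ.source ∩ M) \ A)) with hNdef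
    have hN : volume N = 0 :=
      measure_mono_null inter_subset_right (hAfull p hp)
    have hder : ∀ z ∈ B \ N, HasFDerivAt G (0 : Em d →L[ℝ] ℝ) z := by
      intro z hz
      have hzB : z ∈ B := hz.1
      have hzO : z ∈ φ '' (φ.source ∩ M) := (hball hzB).2
      obtain ⟨y, ⟨hysrc, hyM⟩, hzy⟩ := hzO
      have hyA : y ∈ A := by
        by_contra hyA
        exact hz.2 ⟨hzB, ⟨y, ⟨⟨hysrc, hyM⟩, hyA⟩, hzy⟩⟩
      set ψ := chartAt (Em d) y with hψ
      obtain ⟨D, hD₁, hD₂⟩ := hgrad y hyA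
      set e := φ.symm.trans ψ with he_def
      have he : e ∈ contDiffGroupoid ((⊤ : ℕ∞) : WithTop ℕ∞) (𝓡 d) :=
        HasGroupoid.compatible (chart_mem_atlas (Em d) p) (chart_mem_atlas (Em d) y)
      have hsm : ContDiffOn ℝ ((⊤ : ℕ∞) : WithTop ℕ∞) e e.source := by
        have := (mem_groupoid_of_pregroupoid.1 he).1
        simpa [contDiffPregroupoid] using this
      have hzsrc : z ∈ e.source := by
        subst hzy
        rw [he_def, OpenPartialHomeomorph.trans_source, OpenPartialHomeomorph.symm_source]
        refine ⟨φ.map_source hysrc, mem_preimage.2 ?_⟩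
        rw [φ.left_inv hysrc]
        exact mem_chart_source _ y
      have hEz : HasFDerivAt e (fderiv ℝ e z) z :=
        (((hsm.differentiableOn (by simp)) z hzsrc).differentiableAt
          (e.open_source.mem_nhds hzsrc)).hasFDerivAt
      set U := e.source ∩ (φ '' (φ.source ∩ M)) with hUdef
      have hUopen : IsOpen U := e.open_source.inter hOopen
      have hzU : z ∈ U := ⟨hzsrc, ⟨y, ⟨hysrc, hyM⟩, hzy⟩⟩
      have hsrc_mem : ∀ w ∈ U, ∀ y' , y' ∈ φ.source → y' ∈ M → φ y' = w →
          (φ.symm w = y' ∧ y' ∈ ψ.source ∧ e w = ψ y') := by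
        intro w hw y' hy'src hy'M hwy'
        have h1 : φ.symm w = y' := by rw [← hwy']; exact φ.left_inv hy'src
        have h2 : y' ∈ ψ.source := by
          have := hw.1
          rw [he_def, OpenPartialHomeomorph.trans_source, OpenPartialHomeomorph.symm_source] at this
          have := this.2
          rwa [mem_preimage, h1] at this
        refine ⟨h1, h2, ?_⟩
        rw [he_def, OpenPartialHomeomorph.trans_apply, h1]
      have hmaps : MapsTo e U (ψ '' (ψ.source ∩ M)) := by
        rintro w ⟨hwsrc, y', ⟨hy'src, hy'M⟩, rfl⟩
        obtain ⟨h1, h2, h3⟩ := hsrc_mem _ ⟨hwsrc, ⟨y', ⟨hy'src, hy'M⟩, rfl⟩⟩ y' hy'src hy'M rfl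
        exact ⟨y', ⟨h2, hy'M⟩, h3.symm⟩
      have heZ : e z = ψ y := (hsrc_mem z hzU y hysrc hyM hzy).2.2
      have hcomp : ∀ f : X → ℝ,
          HasFDerivWithinAt (fun v => f (ψ.symm v)) D (ψ '' (ψ.source ∩ M)) (ψ y) →
          HasFDerivAt (fun v => f (φ.symm v)) (D.comp (fderiv ℝ e z)) z := by
        intro f hDf
        have hcompw : HasFDerivWithinAt ((fun v => f (ψ.symm v)) ∘ e)
            (D.comp (fderiv ℝ e z)) U z :=
          HasFDerivWithinAt.comp z (heZ ▸ hDf) hEz.hasFDerivWithinAt hmaps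
        have heqOn : ∀ w ∈ U, (fun v => f (φ.symm v)) w = ((fun v => f (ψ.symm v)) ∘ e) w := by
          rintro w hw
          obtain ⟨y', ⟨hy'src, hy'M⟩, hwy'⟩ := hw.2
          obtain ⟨h1, h2, h3⟩ := hsrc_mem w hw y' hy'src hy'M hwy'
          simp only [Function.comp_apply, h3, h1, ψ.left_inv h2]
        exact ((hcompw.congr heqOn (heqOn z hzU)).hasFDerivAt (hUopen.mem_nhds hzU))
      have h1 := hcomp f₁ hD₁
      have h2 := hcomp f₂ hD₂
      have hgz : HasFDerivAt g (0 : Em d →L[ℝ] ℝ) z := by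
        have := h1.sub h2
        simp only [sub_self] at this
        exact this
      apply hgz.congr_of_eventuallyEq
      filter_upwards [Metric.isOpen_ball.mem_nhds hzB] with w hw
      exact (hGeq hw).symm
    have hconst := fun a b ha hb =>
      auxseg hGlip (convex_ball _ _) Metric.isOpen_ball hN hder (x := a) (y := b) ha hb
    refine ⟨φ.source ∩ φ ⁻¹' B, φ.isOpen_inter_preimage Metric.isOpen_ball,
      ⟨mem_chart_source _ p, by simp [hBdef, Metric.mem_ball_self hr]⟩, ?_⟩
    rintro q ⟨⟨hqsrc, hqB⟩, hqM⟩
    have e1 : f₁ q - f₂ q = g (φ q) := by simp [hgdef, φ.left_inv hqsrc]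
    have e2 : f₁ p - f₂ p = g (φ p) := by simp [hgdef, φ.left_inv (mem_chart_source _ p)]
    rw [e1, e2, hGeq hqB, hGeq (Metric.mem_ball_self hr)]
    exact hconst _ _ hqB (Metric.mem_ball_self hr)
  -- Globalize by connectedness
  by_cases hM : M.Nonempty
  · obtain ⟨x₀, hx₀⟩ := hM
    refine ⟨f₁ x₀ - f₂ x₀, ?_⟩
    set c := f₁ x₀ - f₂ x₀ with hc
    choose W hWopen hWmem hWconst using hloc
    set u := ⋃ (p : X) (hp : p ∈ M) (_ : f₁ p - f₂ p = c), W p hp with hu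
    set w := ⋃ (p : X) (hp : p ∈ M) (_ : f₁ p - f₂ p ≠ c), W p hp with hw
    have huo : IsOpen u := isOpen_iUnion fun p => isOpen_iUnion fun hp =>
      isOpen_iUnion fun _ => hWopen p hp
    have hwo : IsOpen w := isOpen_iUnion fun p => isOpen_iUnion fun hp =>
      isOpen_iUnion fun _ => hWopen p hp
    have hcover : M ⊆ u ∪ w := by
      intro q hq
      by_cases hqc : f₁ q - f₂ q = c
      · exact Or.inl (mem_iUnion.2 ⟨q, mem_iUnion.2 ⟨hq, mem_iUnion.2 ⟨hqc, hWmem q hq⟩⟩⟩)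
      · exact Or.inr (mem_iUnion.2 ⟨q, mem_iUnion.2 ⟨hq, mem_iUnion.2 ⟨hqc, hWmem q hq⟩⟩⟩)
    have hval : ∀ q ∈ M ∩ u, f₁ q - f₂ q = c := by
      rintro q ⟨hqM, hqu⟩
      obtain ⟨p, hpmem⟩ := mem_iUnion.1 hqu
      obtain ⟨hp, hpmem⟩ := mem_iUnion.1 hpmem
      obtain ⟨hpc, hqW⟩ := mem_iUnion.1 hpmem
      rw [hWconst p hp q ⟨hqW, hqM⟩, hpc]
    have hval' : ∀ q ∈ M ∩ w, f₁ q - f₂ q ≠ c := by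
      rintro q ⟨hqM, hqw⟩
      obtain ⟨p, hpmem⟩ := mem_iUnion.1 hqw
      obtain ⟨hp, hpmem⟩ := mem_iUnion.1 hpmem
      obtain ⟨hpc, hqW⟩ := mem_iUnion.1 hpmem
      rw [hWconst p hp q ⟨hqW, hqM⟩]
      exact hpc
    have hwempty : ¬ (M ∩ w).Nonempty := by
      rintro hne
      have hune : (M ∩ u).Nonempty := ⟨x₀, hx₀,
        mem_iUnion.2 ⟨x₀, mem_iUnion.2 ⟨hx₀, mem_iUnion.2 ⟨rfl, hWmem x₀ hx₀⟩⟩⟩⟩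
      obtain ⟨q, hq⟩ := hMconn u w huo hwo hcover hune hne
      exact hval' q ⟨hq.1, hq.2.2⟩ (hval q ⟨hq.1, hq.2.1⟩)
    intro x hx
    have hxu : x ∈ u := by
      rcases hcover hx with h | h
      · exact h
      · exact absurd ⟨x, hx, h⟩ hwempty
    have := hval x ⟨hx, hxu⟩
    linarith
  · exact ⟨0, fun x hx => absurd ⟨x, hx⟩ hM⟩
end
end
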